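/- Let X be a finite nonempty set, let Π and P be full-support probability distributions on X, set r(x) = P(x)/Π(x), α = max_{x∈X} P(x)/Π(x) and β = max_{x∈X} Π(x)/P(x). Let T ≥ 1 be an integer, let x₁, …, x_T be independent random variables each distributed according to Π, let λ ≥ 0 be real, and let η′ be a square-integrable real-valued random variable independent of (x₁,…,x_T) with variance σ′². Then Var[(1/T)·∑_{t=1}^{T}(λ(r(x_t) − 1) − log r(x_t)) + 2η′/T] ≤ (λ²/T)(α − 1) + (1/T)(max{α − 1, β² − 1} + D_KL(Π‖P)²) − (2λ/T)·(D_KL(P‖Π) + D_KL(Π‖P)) + 4σ′²/T². (Variance bound for PRIEST-KLD under the trusted aggregator model.) -/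

import Mathlib

open Finset MeasureTheory ProbabilityTheory

/-- Kullback–Leibler divergence between two (full-support) distributions on a finite set. -/
noncomputable def KLdiv {X : Type*} [Fintype X] (P Q : X → ℝ) : ℝ :=
  ∑ x, P x * Real.log (P x / Q x)

lemma sq_le_exp_add_exp_neg (x : ℝ) : x ^ 2 ≤ Real.exp x + Real.exp (-x) - 2 := by
  have main : ∀ y : ℝ, 0 ≤ y → y ^ 2 ≤ Real.exp y + Real.exp (-y) - 2 := by
    intro y hy
    have h1 : y / 2 ≤ Real.sinh (y / 2) := Real.self_le_sinh_iff.2 (by linarith)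
    rw [Real.sinh_eq] at h1
    have e1 : Real.exp (y/2) * Real.exp (y/2) = Real.exp y := by
      rw [← Real.exp_add]; ring_nf
    have e2 : Real.exp (-(y/2)) * Real.exp (-(y/2)) = Real.exp (-y) := by
      rw [← Real.exp_add]; ring_nf
    have e3 : Real.exp (y/2) * Real.exp (-(y/2)) = 1 := by
      rw [← Real.exp_add]; simp
    nlinarith [h1, hy, Real.exp_pos (y/2), Real.exp_pos (-(y/2))]
  rcases le_total 0 x with hx | hx
  · exact main x hx
  · have := main (-x) (by linarith)
    rw [neg_neg] at this
    nlinarith [this]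

lemma log_sq_le {r : ℝ} (hr : 0 < r) : (Real.log r) ^ 2 ≤ r + 1 / r - 2 := by
  have h := sq_le_exp_add_exp_neg (Real.log r)
  rw [Real.exp_log hr, Real.exp_neg, Real.exp_log hr] at h
  calc (Real.log r) ^ 2 ≤ r + r⁻¹ - 2 := h
    _ = r + 1 / r - 2 := by rw [one_div]

lemma integral_comp_fin {X : Type*} [Fintype X] [MeasurableSpace X] [MeasurableSingletonClass X]
    {Ω : Type*} [MeasureSpace Ω] [IsProbabilityMeasure (ℙ : Measure Ω)]
    (Pi : X → ℝ) (hPipos : ∀ x, 0 ≤ Pi x)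
    (f : Ω → X) (hf : Measurable f)
    (hlaw : ∀ x, (ℙ : Measure Ω) (f ⁻¹' {x}) = ENNReal.ofReal (Pi x))
    (g : X → ℝ) :
    ∫ ω, g (f ω) ∂ℙ = ∑ x, Pi x * g x := by
  have hpt : ∀ ω, g (f ω) = ∑ x : X, Set.indicator (f ⁻¹' {x}) (fun _ => g x) ω := by
    intro ω
    rw [Finset.sum_eq_single (f ω)]
    · simp
    · intro b _ hb
      apply Set.indicator_of_notMem
      simp only [Set.mem_preimage, Set.mem_singleton_iff]
      exact fun h => hb (h ▸ rfl)
    · simp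
  calc ∫ ω, g (f ω) ∂ℙ
      = ∫ ω, ∑ x : X, Set.indicator (f ⁻¹' {x}) (fun _ => g x) ω ∂ℙ := by simp_rw [hpt]
    _ = ∑ x : X, ∫ ω, Set.indicator (f ⁻¹' {x}) (fun _ => g x) ω ∂ℙ := by
        apply integral_finset_sum
        intro x _
        exact (integrable_indicator_iff (hf (measurableSet_singleton x))).2
          (integrableOn_const (measure_ne_top _ _))
    _ = ∑ x, Pi x * g x := by
        refine Finset.sum_congr rfl fun x _ => ?_
        rw [integral_indicator_const _ (hf (measurableSet_singleton x)), Measure.real, hlaw, smul_eq_mul,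
          ENNReal.toReal_ofReal (hPipos x)]

theorem tagg_estimator_variance_bound {X : Type*} [Fintype X] [Nonempty X]
    [MeasurableSpace X] [MeasurableSingletonClass X]
    (Pi P : X → ℝ)
    (hPipos : ∀ x, 0 < Pi x) (hPisum : ∑ x, Pi x = 1)
    (hPpos : ∀ x, 0 < P x) (hPsum : ∑ x, P x = 1)
    (T : ℕ) (hT : 1 ≤ T)
    {Ω : Type*} [MeasureSpace Ω] [IsProbabilityMeasure (ℙ : Measure Ω)]
    (xs : Fin T → Ω → X) (hmeas : ∀ t, Measurable (xs t))
    (hindep : iIndepFun xs ℙ)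
    (hlaw : ∀ t x, (ℙ : Measure Ω) (xs t ⁻¹' {x}) = ENNReal.ofReal (Pi x))
    (lam : ℝ) (hlam : 0 ≤ lam)
    (η' : Ω → ℝ) (hη' : MemLp η' 2 ℙ)
    (hη'indep : IndepFun (fun ω => (fun t => xs t ω)) η' ℙ)
    (σ'2 : ℝ) (hσ'2 : variance η' ℙ = σ'2) :
    variance (fun ω => (1 / (T : ℝ)) * ∑ t : Fin T,
        (lam * (P (xs t ω) / Pi (xs t ω) - 1) - Real.log (P (xs t ω) / Pi (xs t ω)))
      + 2 * η' ω / T) ℙ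
    ≤ (lam ^ 2 / T) * (univ.sup' univ_nonempty (fun x => P x / Pi x) - 1)
      + (1 / (T : ℝ)) * (max (univ.sup' univ_nonempty (fun x => P x / Pi x) - 1)
            ((univ.sup' univ_nonempty (fun x => Pi x / P x)) ^ 2 - 1)
          + KLdiv Pi P ^ 2)
      - (2 * lam / T) * (KLdiv P Pi + KLdiv Pi P)
      + 4 * σ'2 / T ^ 2 := by
  classical
  have hT0 : (0:ℝ) < (T:ℝ) := by
    have : 0 < T := hT
    exact_mod_cast this
  set a := univ.sup' univ_nonempty (fun x => P x / Pi x) with ha_def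
  set b := univ.sup' univ_nonempty (fun x => Pi x / P x) with hb_def
  set f : X → ℝ := fun x => lam * (P x / Pi x - 1) - Real.log (P x / Pi x) with hf_def
  have hfm : Measurable f := measurable_of_countable f
  set M : ℝ := lam^2 * (a - 1) + max (a-1) (b^2-1) - 2*lam*(KLdiv P Pi + KLdiv Pi P) with hM_def
  -- basic facts
  have hr : ∀ x, 0 < P x / Pi x := fun x => div_pos (hPpos x) (hPipos x)
  have hra : ∀ x, P x / Pi x ≤ a := fun x => by rw [ha_def]; exact le_sup' (fun x => P x / Pi x) (mem_univ x)
  have hrb : ∀ x, Pi x / P x ≤ b := fun x => by rw [hb_def]; exact le_sup' (fun x => Pi x / P x) (mem_univ x)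
  -- the key pointwise-sum bound
  have hA : ∑ x, Pi x * (P x / Pi x - 1)^2 ≤ a - 1 := by
    have h1 : ∀ x : X, Pi x * (P x / Pi x - 1)^2 = P x * (P x / Pi x) - 2 * P x + Pi x := by
      intro x
      have h0 : Pi x ≠ 0 := (hPipos x).ne'
      field_simp
      ring
    calc ∑ x, Pi x * (P x / Pi x - 1)^2
        = ∑ x, (P x * (P x / Pi x) - 2 * P x + Pi x) := Finset.sum_congr rfl fun x _ => h1 x
      _ = (∑ x, P x * (P x / Pi x)) - 2 * (∑ x, P x) + ∑ x, Pi x := by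
          rw [Finset.sum_add_distrib, Finset.sum_sub_distrib, Finset.mul_sum]
      _ = (∑ x, P x * (P x / Pi x)) - 1 := by rw [hPsum, hPisum]; ring
      _ ≤ a - 1 := by
          have : ∑ x, P x * (P x / Pi x) ≤ a := by
            calc ∑ x, P x * (P x / Pi x) ≤ ∑ x, P x * a :=
                  Finset.sum_le_sum fun x _ =>
                    mul_le_mul_of_nonneg_left (hra x) (hPpos x).le
              _ = a := by rw [← Finset.sum_mul, hPsum, one_mul]
          linarith
  have hlogflip : ∀ x : X, Real.log (Pi x / P x) = - Real.log (P x / Pi x) := by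
    intro x; rw [← Real.log_inv, inv_div]
  have hB : ∑ x, Pi x * ((P x / Pi x - 1) * Real.log (P x / Pi x))
      = KLdiv P Pi + KLdiv Pi P := by
    have h1 : ∀ x : X, Pi x * ((P x / Pi x - 1) * Real.log (P x / Pi x))
        = P x * Real.log (P x / Pi x) + Pi x * Real.log (Pi x / P x) := by
      intro x
      rw [hlogflip x]
      have h0 : Pi x ≠ 0 := (hPipos x).ne'
      field_simp
      ring
    rw [Finset.sum_congr rfl fun x _ => h1 x, Finset.sum_add_distrib]
    simp only [KLdiv]
  have hb1 : (1:ℝ) ≤ b := by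
    obtain ⟨x0, hx0⟩ : ∃ x, P x ≤ Pi x := by
      by_contra h
      push_neg at h
      have := Finset.sum_lt_sum_of_nonempty univ_nonempty (fun x _ => h x)
      rw [hPisum, hPsum] at this
      exact lt_irrefl 1 this
    exact le_trans ((one_le_div (hPpos x0)).2 hx0) (hrb x0)
  have hC : ∑ x, Pi x * (Real.log (P x / Pi x))^2 ≤ max (a-1) (b^2-1) := by
    have h1 : ∀ x : X, Pi x * (Real.log (P x / Pi x))^2
        ≤ P x + Pi x * (Pi x / P x) - 2 * Pi x := by
      intro x
      have h2 := log_sq_le (hr x)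
      have h3 : Pi x * (P x / Pi x + 1/(P x / Pi x) - 2)
          = P x + Pi x * (Pi x / P x) - 2 * Pi x := by
        have h0 : Pi x ≠ 0 := (hPipos x).ne'
        have h0' : P x ≠ 0 := (hPpos x).ne'
        field_simp
      calc Pi x * (Real.log (P x / Pi x))^2
          ≤ Pi x * (P x / Pi x + 1/(P x / Pi x) - 2) :=
            mul_le_mul_of_nonneg_left h2 (hPipos x).le
        _ = P x + Pi x * (Pi x / P x) - 2 * Pi x := h3
    calc ∑ x, Pi x * (Real.log (P x / Pi x))^2
        ≤ ∑ x, (P x + Pi x * (Pi x / P x) - 2 * Pi x) := Finset.sum_le_sum fun x _ => h1 x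
      _ = 1 + (∑ x, Pi x * (Pi x / P x)) - 2 := by
          rw [Finset.sum_sub_distrib, Finset.sum_add_distrib, hPsum, ← Finset.mul_sum,
            hPisum, mul_one]
      _ ≤ 1 + b - 2 := by
          have : ∑ x, Pi x * (Pi x / P x) ≤ b := by
            calc ∑ x, Pi x * (Pi x / P x) ≤ ∑ x, Pi x * b :=
                  Finset.sum_le_sum fun x _ =>
                    mul_le_mul_of_nonneg_left (hrb x) (hPipos x).le
              _ = b := by rw [← Finset.sum_mul, hPisum, one_mul]
          linarith
      _ ≤ max (a-1) (b^2-1) := le_trans (by nlinarith) (le_max_right _ _)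
  have hexp : ∑ x, Pi x * (f x)^2
      = lam^2 * (∑ x, Pi x * (P x / Pi x - 1)^2)
        - 2*lam*(∑ x, Pi x * ((P x / Pi x - 1) * Real.log (P x / Pi x)))
        + ∑ x, Pi x * (Real.log (P x / Pi x))^2 := by
    rw [Finset.mul_sum, Finset.mul_sum, ← Finset.sum_sub_distrib, ← Finset.sum_add_distrib]
    refine Finset.sum_congr rfl fun x _ => ?_
    simp only [hf_def]
    ring
  have hsum_bound : ∑ x, Pi x * (f x)^2 ≤ M := by
    rw [hexp, hB, hM_def]
    have h1 : lam^2 * (∑ x, Pi x * (P x / Pi x - 1)^2) ≤ lam^2 * (a - 1) :=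
      mul_le_mul_of_nonneg_left hA (sq_nonneg lam)
    linarith
  -- probabilistic part
  set U : Ω → ℝ := fun ω => (1 / (T : ℝ)) * ∑ t : Fin T, f (xs t ω) with hU_def
  set V : Ω → ℝ := fun ω => 2 * η' ω / T with hV_def
  have hgoalfun : (fun ω => (1 / (T : ℝ)) * ∑ t : Fin T,
        (lam * (P (xs t ω) / Pi (xs t ω) - 1) - Real.log (P (xs t ω) / Pi (xs t ω)))
      + 2 * η' ω / T) = U + V := rfl
  rw [hgoalfun]
  have hYm : ∀ t, Measurable (fun ω => f (xs t ω)) := fun t => hfm.comp (hmeas t)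
  set C : ℝ := univ.sup' univ_nonempty (fun x => |f x|) with hC_def
  have hCb : ∀ x, |f x| ≤ C := fun x => by rw [hC_def]; exact le_sup' (fun x => |f x|) (mem_univ x)
  have hYmem : ∀ t, MemLp (fun ω => f (xs t ω)) 2 ℙ := fun t =>
    MemLp.of_bound (hYm t).aestronglyMeasurable C
      (Filter.Eventually.of_forall fun ω => by
        simpa [Real.norm_eq_abs] using hCb (xs t ω))
  have hUm : Measurable U :=
    (Finset.measurable_sum univ fun t _ => hYm t).const_mul _
  have hUmem : MemLp U 2 ℙ := by
    apply MemLp.of_bound hUm.aestronglyMeasurable C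
    filter_upwards with ω
    simp only [hU_def, Real.norm_eq_abs]
    have h1 : |∑ t : Fin T, f (xs t ω)| ≤ (T:ℝ) * C := by
      calc |∑ t : Fin T, f (xs t ω)| ≤ ∑ t : Fin T, |f (xs t ω)| :=
            Finset.abs_sum_le_sum_abs _ _
        _ ≤ ∑ _t : Fin T, C := Finset.sum_le_sum fun t _ => hCb _
        _ = (T:ℝ) * C := by simp [Finset.sum_const, Finset.card_univ, mul_comm]
    calc |1 / (T:ℝ) * ∑ t : Fin T, f (xs t ω)|
        = (1/(T:ℝ)) * |∑ t : Fin T, f (xs t ω)| := by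
          rw [abs_mul, abs_of_nonneg (by positivity : (0:ℝ) ≤ 1/(T:ℝ))]
      _ ≤ (1/(T:ℝ)) * ((T:ℝ) * C) := by
          apply mul_le_mul_of_nonneg_left h1 (by positivity)
      _ = C := by field_simp
  have hVmem : MemLp V 2 ℙ := by
    have h1 : V = fun ω => (2/(T:ℝ)) * η' ω := by
      funext ω; simp only [hV_def]; ring
    rw [h1]; exact hη'.const_mul _
  have hUV : IndepFun U V ℙ := by
    have hφ : Measurable (fun v : Fin T → X => (1/(T:ℝ)) * ∑ t : Fin T, f (v t)) :=
      (Finset.measurable_sum univ fun t _ => hfm.comp (measurable_pi_apply t)).const_mul _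
    have hψ : Measurable (fun y : ℝ => 2 * y / T) :=
      (measurable_id.const_mul 2).div_const _
    exact hη'indep.comp hφ hψ
  rw [IndepFun.variance_add hUmem hVmem hUV]
  have hVvar : variance V ℙ = 4 * σ'2 / T^2 := by
    have h1 : V = (2/(T:ℝ)) • η' := by
      funext ω; simp only [hV_def, _root_.Pi.smul_apply, smul_eq_mul]; ring
    rw [h1, variance_smul, hσ'2, div_pow]
    norm_num
    ring
  have hUvar : variance U ℙ
      = (1/(T:ℝ))^2 * ∑ t : Fin T, variance (fun ω => f (xs t ω)) ℙ := by
    have h1 : U = (1/(T:ℝ)) • (∑ t : Fin T, (fun ω => f (xs t ω))) := by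
      funext ω
      simp only [hU_def, _root_.Pi.smul_apply, smul_eq_mul, Finset.sum_apply]
    rw [h1, variance_smul,
      IndepFun.variance_sum (fun t _ => hYmem t)
        (fun i _ j _ hij => (hindep.indepFun hij).comp hfm hfm)]
  have hvar_t : ∀ t, variance (fun ω => f (xs t ω)) ℙ ≤ M := by
    intro t
    calc variance (fun ω => f (xs t ω)) ℙ
        ≤ ℙ[(fun ω => f (xs t ω)) ^ 2] :=
          variance_le_expectation_sq (hYm t).aestronglyMeasurable
      _ = ∑ x, Pi x * (f x)^2 := by
          have h2 : ((fun ω => f (xs t ω)) ^ 2) = fun ω => (fun x => (f x)^2) (xs t ω) := by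
            funext ω; simp
          rw [h2]
          exact integral_comp_fin Pi (fun x => (hPipos x).le) (xs t) (hmeas t) (hlaw t) _
      _ ≤ M := hsum_bound
  have hsum_le : ∑ t : Fin T, variance (fun ω => f (xs t ω)) ℙ ≤ (T:ℝ) * M := by
    calc ∑ t : Fin T, variance (fun ω => f (xs t ω)) ℙ
        ≤ ∑ _t : Fin T, M := Finset.sum_le_sum fun t _ => hvar_t t
      _ = (T:ℝ) * M := by simp [Finset.sum_const, Finset.card_univ, mul_comm]
  rw [hUvar, hVvar]
  have key : (1/(T:ℝ))^2 * ∑ t : Fin T, variance (fun ω => f (xs t ω)) ℙ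
      ≤ (M + KLdiv Pi P ^ 2) / T := by
    calc (1/(T:ℝ))^2 * ∑ t : Fin T, variance (fun ω => f (xs t ω)) ℙ
        ≤ (1/(T:ℝ))^2 * ((T:ℝ) * M) :=
          mul_le_mul_of_nonneg_left hsum_le (by positivity)
      _ = M / T := by field_simp
      _ ≤ (M + KLdiv Pi P ^ 2) / T :=
          (div_le_div_iff_of_pos_right hT0).2 (by nlinarith [sq_nonneg (KLdiv Pi P)])
  have hRHS : (lam ^ 2 / (T:ℝ)) * (a - 1)
      + (1 / (T : ℝ)) * (max (a - 1) (b ^ 2 - 1) + KLdiv Pi P ^ 2)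
      - (2 * lam / T) * (KLdiv P Pi + KLdiv Pi P) = (M + KLdiv Pi P ^ 2) / T := by
    rw [hM_def]
    field_simp
    ring
  linarith [key]
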